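/- arXiv:1404.0920 — 2 statements merged into one kernel-verified Lean document; each statement's English description precedes it below -/
import Mathlib

section
/- Suppose f₁, f₂ : ℝⁿ → [0,∞) satisfy fⱼ(λ) = Kⱼ(λ)/|λ|^{n−κⱼ} with κⱼ > 0, where K₁, K₂ are nonnegative bounded continuous functions on ℝⁿ \ {0} and f₁, f₂ ∈ L¹(ℝⁿ). If κ₁ + κ₂ < n, then there is a bounded function B, continuous on ℝⁿ \ {0}, such that the convolution g(λ) = ∫_{ℝⁿ} f₁(λ−η) f₂(η) dη satisfies g(λ) = B(λ)|λ|^{κ₁+κ₂−n} for all λ ≠ 0; equivalently, sup_{λ≠0} g(λ)|λ|^{n−κ₁−κ₂} < ∞. -/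
open Real MeasureTheory Metric Set ENNReal Filter

variable {n : ℕ}


lemma aux_ball_integrable (hn : 1 ≤ n) {p : ℝ} (hp : -(n:ℝ) < p) (hp0 : p < 0) {R : ℝ} (hR : 0 < R) :
    IntegrableOn (fun x : EuclideanSpace ℝ (Fin n) => ‖x‖ ^ p) (ball 0 R) := by
  have hmeas : Measurable fun x : EuclideanSpace ℝ (Fin n) => ‖x‖ ^ p := by fun_prop
  constructor
  · exact hmeas.aestronglyMeasurable
  · have hnn : ∀ x : EuclideanSpace ℝ (Fin n), 0 ≤ ‖x‖ ^ p := fun x => rpow_nonneg (norm_nonneg x) p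
    rw [HasFiniteIntegral, lintegral_enorm_of_nonneg (fun x => hnn x),
      lintegral_eq_lintegral_meas_le _ (Eventually.of_forall hnn) hmeas.aemeasurable]
    set μ := (volume : Measure (EuclideanSpace ℝ (Fin n)))
    set T : ℝ := R ^ p with hT
    have hTpos : 0 < T := rpow_pos_of_pos hR p
    have key : ∀ t : ℝ, 0 < t →
        (μ.restrict (ball 0 R)) {a | t ≤ ‖a‖ ^ p} ≤
          min (μ (ball (0 : EuclideanSpace ℝ (Fin n)) R)) (μ (closedBall (0 : EuclideanSpace ℝ (Fin n)) (t ^ p⁻¹))) := by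
      intro t ht
      refine le_min ?_ ?_
      · exact (measure_mono (subset_univ _)).trans_eq (Measure.restrict_apply_univ _)
      · refine le_trans (Measure.restrict_le_self _) (measure_mono ?_)
        intro a ha
        simp only [mem_setOf_eq] at ha
        have ha0 : a ≠ 0 := by
          rintro rfl
          rw [norm_zero, Real.zero_rpow hp0.ne] at ha
          exact absurd (ht.trans_le ha) (lt_irrefl 0)
        have hna : 0 < ‖a‖ := norm_pos_iff.mpr ha0
        rw [mem_closedBall_zero_iff]
        exact (Real.le_rpow_inv_iff_of_neg hna ht hp0).mpr ha
    calc ∫⁻ t in Ioi (0:ℝ), (μ.restrict (ball 0 R)) {a | t ≤ ‖a‖ ^ p}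
        ≤ ∫⁻ t in Ioc 0 T ∪ Ioi T, (μ.restrict (ball 0 R)) {a | t ≤ ‖a‖ ^ p} :=
          lintegral_mono_set Ioi_subset_Ioc_union_Ioi
      _ ≤ (∫⁻ t in Ioc 0 T, (μ.restrict (ball 0 R)) {a | t ≤ ‖a‖ ^ p}) +
          ∫⁻ t in Ioi T, (μ.restrict (ball 0 R)) {a | t ≤ ‖a‖ ^ p} := lintegral_union_le _ _ _
      _ < ∞ := by
          refine ENNReal.add_lt_top.2 ⟨?_, ?_⟩
          · calc ∫⁻ t in Ioc 0 T, (μ.restrict (ball 0 R)) {a | t ≤ ‖a‖ ^ p}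
                ≤ ∫⁻ _ in Ioc 0 T, μ (ball (0 : EuclideanSpace ℝ (Fin n)) R) := by
                  refine setLIntegral_mono' measurableSet_Ioc fun t ht => ?_
                  exact ((key t ht.1).trans (min_le_left _ _))
              _ = μ (ball (0 : EuclideanSpace ℝ (Fin n)) R) * volume (Ioc 0 T) := setLIntegral_const _ _
              _ < ∞ := ENNReal.mul_lt_top measure_ball_lt_top (by simp)
          · have hq : (n:ℝ) * p⁻¹ < -1 := by
              rw [← div_eq_mul_inv, div_lt_iff_of_neg hp0]
              linarith
            calc ∫⁻ t in Ioi T, (μ.restrict (ball 0 R)) {a | t ≤ ‖a‖ ^ p}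
                ≤ ∫⁻ t in Ioi T, ENNReal.ofReal (t ^ ((n:ℝ) * p⁻¹)) * μ (ball (0 : EuclideanSpace ℝ (Fin n)) 1) := by
                  refine setLIntegral_mono' measurableSet_Ioi fun t ht => ?_
                  have ht' : 0 < t := hTpos.trans ht
                  refine ((key t ht').trans (min_le_right _ _)).trans ?_
                  rw [μ.addHaar_closedBall 0 (rpow_nonneg ht'.le _)]
                  gcongr
                  rw [finrank_euclideanSpace_fin, ← Real.rpow_natCast (t ^ p⁻¹) n,
                    ← Real.rpow_mul ht'.le, mul_comm]
              _ = (∫⁻ t in Ioi T, ENNReal.ofReal (t ^ ((n:ℝ) * p⁻¹))) * μ (ball (0 : EuclideanSpace ℝ (Fin n)) 1) :=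
                  lintegral_mul_const' _ _ measure_ball_lt_top.ne
              _ < ∞ := ENNReal.mul_lt_top
                  ((integrableOn_Ioi_rpow_of_lt hq hTpos).setLIntegral_lt_top) measure_ball_lt_top

lemma aux_compl_integrable (hn : 1 ≤ n) {p : ℝ} (hp : p < -(n:ℝ)) {R : ℝ} (hR : 0 < R) :
    IntegrableOn (fun x : EuclideanSpace ℝ (Fin n) => ‖x‖ ^ p) (ball 0 R)ᶜ := by
  have hi : Integrable (fun x : EuclideanSpace ℝ (Fin n) => (1 + ‖x‖) ^ p) := by
    have := integrable_one_add_norm (E := EuclideanSpace ℝ (Fin n)) (μ := volume) (r := -p)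
      (by rw [finrank_euclideanSpace_fin]; linarith)
    simpa using this
  refine Integrable.mono' (((hi.const_mul ((1 + R⁻¹) ^ (-p))).restrict)) (by fun_prop : Measurable fun x : EuclideanSpace ℝ (Fin n) => ‖x‖ ^ p).aestronglyMeasurable.restrict
    ((ae_restrict_iff' measurableSet_ball.compl).2 (Eventually.of_forall fun x hx => ?_))
  simp only [mem_compl_iff, mem_ball, dist_zero_right, not_lt] at hx
  have hx0 : 0 < ‖x‖ := hR.trans_le hx
  have h1 : 1 + ‖x‖ ≤ (1 + R⁻¹) * ‖x‖ := by
    rw [add_mul, one_mul]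
    have h0 : (1:ℝ) ≤ R⁻¹ * ‖x‖ := by
      rw [inv_mul_eq_div, le_div_iff₀ hR]
      simpa using hx
    linarith
  have h2 : ((1 + R⁻¹) * ‖x‖) ^ p ≤ (1 + ‖x‖) ^ p :=
    rpow_le_rpow_of_nonpos (by positivity) h1 (by linarith)
  rw [Real.norm_eq_abs, abs_of_nonneg (rpow_nonneg (norm_nonneg x) p)]
  rw [Real.mul_rpow (by positivity) (norm_nonneg x)] at h2
  calc ‖x‖ ^ p = (1 + R⁻¹) ^ (-p) * ((1 + R⁻¹) ^ p * ‖x‖ ^ p) := by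
        rw [← mul_assoc, ← Real.rpow_add (by positivity), neg_add_cancel, Real.rpow_zero, one_mul]
    _ ≤ (1 + R⁻¹) ^ (-p) * (1 + ‖x‖) ^ p := by
        gcongr


lemma aux_scale (p : ℝ) {R : ℝ} (hR : 0 < R) (s₁ sR : Set (EuclideanSpace ℝ (Fin n)))
    (hmem : ∀ x : EuclideanSpace ℝ (Fin n), R • x ∈ sR ↔ x ∈ s₁)
    (hmeasR : MeasurableSet sR) (hmeas1 : MeasurableSet s₁) :
    ∫ x in sR, ‖x‖ ^ p = R ^ ((n:ℝ) + p) * ∫ x in s₁, ‖x‖ ^ p := by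
  have h := Measure.integral_comp_smul (μ := volume)
    (f := sR.indicator fun x : EuclideanSpace ℝ (Fin n) => ‖x‖ ^ p) R
  have e1 : ∀ x : EuclideanSpace ℝ (Fin n),
      (sR.indicator fun y => ‖y‖ ^ p) (R • x) = R ^ p * (s₁.indicator fun y => ‖y‖ ^ p) x := by
    intro x
    by_cases hx : x ∈ s₁
    · rw [indicator_of_mem ((hmem x).2 hx), indicator_of_mem hx, norm_smul, Real.norm_eq_abs,
        abs_of_pos hR, Real.mul_rpow hR.le (norm_nonneg x)]
    · rw [indicator_of_notMem (fun h => hx ((hmem x).1 h)), indicator_of_notMem hx, mul_zero]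
  simp_rw [e1, smul_eq_mul] at h
  rw [MeasureTheory.integral_const_mul, integral_indicator hmeas1, integral_indicator hmeasR,
    finrank_euclideanSpace_fin, abs_of_pos (by positivity : (0:ℝ) < (R ^ n)⁻¹)] at h
  have hRn : (0:ℝ) < R ^ n := by positivity
  rw [Real.rpow_add hR, Real.rpow_natCast]
  field_simp at h ⊢
  linarith [h]
set_option maxHeartbeats 1000000 in
lemma key_bound (hn : 1 ≤ n) (f₁ f₂ : EuclideanSpace ℝ (Fin n) → ℝ) (κ₁ κ₂ C₁ C₂ : ℝ)
    (hκ₁ : 0 < κ₁) (hκ₂ : 0 < κ₂) (hsub : κ₁ + κ₂ < n)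
    (hC₁ : 0 ≤ C₁) (hC₂ : 0 ≤ C₂)
    (hb₁ : ∀ z : EuclideanSpace ℝ (Fin n), z ≠ 0 → f₁ z ≤ C₁ * ‖z‖ ^ (κ₁ - (n:ℝ)))
    (hb₂ : ∀ z : EuclideanSpace ℝ (Fin n), z ≠ 0 → f₂ z ≤ C₂ * ‖z‖ ^ (κ₂ - (n:ℝ)))
    (hf₁0 : ∀ z, 0 ≤ f₁ z) (hf₂0 : ∀ z, 0 ≤ f₂ z)
    (hm₁ : AEStronglyMeasurable f₁ volume) (hm₂ : AEStronglyMeasurable f₂ volume) :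
    ∃ M : ℝ, 0 ≤ M ∧ ∀ lam : EuclideanSpace ℝ (Fin n), lam ≠ 0 →
      Integrable (fun η => f₁ (lam - η) * f₂ η) ∧
      (∫ η, f₁ (lam - η) * f₂ η) ≤ M * ‖lam‖ ^ (κ₁ + κ₂ - (n:ℝ)) := by
  haveI : Nontrivial (EuclideanSpace ℝ (Fin n)) :=
    ⟨⟨EuclideanSpace.single ⟨0, hn⟩ 1, 0, by
      intro h
      have := congrArg (fun v => v ⟨0, hn⟩) h
      simp [EuclideanSpace.single_apply] at this⟩⟩
  set a : ℝ := κ₁ - n with ha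
  set b : ℝ := κ₂ - n with hb
  have ha0 : a < 0 := by rw [ha]; linarith
  have hb0 : b < 0 := by rw [hb]; linarith
  have han : -(n:ℝ) < a := by rw [ha]; linarith
  have hbn : -(n:ℝ) < b := by rw [hb]; linarith
  have hab : a + b < -(n:ℝ) := by rw [ha, hb]; linarith
  set ca : ℝ := ∫ x in ball (0:EuclideanSpace ℝ (Fin n)) 1, ‖x‖ ^ a with hca
  set cb : ℝ := ∫ x in ball (0:EuclideanSpace ℝ (Fin n)) 1, ‖x‖ ^ b with hcb
  set cab : ℝ := ∫ x in (ball (0:EuclideanSpace ℝ (Fin n)) 1)ᶜ, ‖x‖ ^ (a+b) with hcab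
  have hca0 : 0 ≤ ca :=
    setIntegral_nonneg measurableSet_ball fun x _ => rpow_nonneg (norm_nonneg x) _
  have hcb0 : 0 ≤ cb :=
    setIntegral_nonneg measurableSet_ball fun x _ => rpow_nonneg (norm_nonneg x) _
  have hcab0 : 0 ≤ cab :=
    setIntegral_nonneg measurableSet_ball.compl fun x _ => rpow_nonneg (norm_nonneg x) _
  refine ⟨C₁ * C₂ * (ca + cb + 2*cab) * (2:ℝ) ^ ((n:ℝ) - κ₁ - κ₂), by positivity,
    fun lam hlam => ?_⟩
  have hm0 : 0 < ‖lam‖ := norm_pos_iff.mpr hlam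
  set r : ℝ := ‖lam‖ / 2 with hr
  have hr0 : 0 < r := by positivity
  set G1 := (ball (0:EuclideanSpace ℝ (Fin n)) r).indicator
    (fun z => ‖z‖ ^ b) with hG1
  set G2 := (ball (0:EuclideanSpace ℝ (Fin n)) r).indicator
    (fun z => ‖z‖ ^ a) with hG2
  set G3 := ((ball (0:EuclideanSpace ℝ (Fin n)) r)ᶜ).indicator
    (fun z => ‖z‖ ^ (a+b)) with hG3
  have iG1 : Integrable G1 :=
    (aux_ball_integrable hn hbn hb0 hr0).integrable_indicator measurableSet_ball
  have iG2 : Integrable G2 :=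
    (aux_ball_integrable hn han ha0 hr0).integrable_indicator measurableSet_ball
  have iG3 : Integrable G3 :=
    (aux_compl_integrable hn hab hr0).integrable_indicator measurableSet_ball.compl
  have hG1nn : ∀ x, 0 ≤ G1 x :=
    indicator_nonneg (fun z _ => rpow_nonneg (norm_nonneg z) _)
  have hG2nn : ∀ x, 0 ≤ G2 x :=
    indicator_nonneg (fun z _ => rpow_nonneg (norm_nonneg z) _)
  have hG3nn : ∀ x, 0 ≤ G3 x :=
    indicator_nonneg (fun z _ => rpow_nonneg (norm_nonneg z) _)
  set F : EuclideanSpace ℝ (Fin n) → ℝ :=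
    fun η => C₁ * C₂ * (r ^ a * G1 η + r ^ b * G2 (lam - η) + G3 η + G3 (lam - η)) with hF
  have iF : Integrable F := by
    apply Integrable.const_mul
    exact (((iG1.const_mul _).add ((iG2.comp_sub_left lam).const_mul _)).add iG3).add
      (iG3.comp_sub_left lam)
  have hae : ∀ᵐ η : EuclideanSpace ℝ (Fin n), f₁ (lam - η) * f₂ η ≤ F η := by
    have h0 : ∀ᵐ η : EuclideanSpace ℝ (Fin n), ¬(η = 0 ∨ η = lam) := by
      rw [ae_iff]
      refine measure_mono_null (fun η hη => ?_)
        (measure_union_null (measure_singleton (0:EuclideanSpace ℝ (Fin n)))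
          (measure_singleton lam))
      simp only [mem_setOf_eq, not_not] at hη
      rcases hη with h | h
      · exact Or.inl h
      · exact Or.inr h
    filter_upwards [h0] with η hη
    push_neg at hη
    obtain ⟨hη0, hηlam⟩ := hη
    have hz0 : lam - η ≠ 0 := sub_ne_zero.mpr (Ne.symm hηlam)
    have hFsplit : F η = C₁*C₂*(r^a * G1 η) + C₁*C₂*(r^b * G2 (lam - η))
        + C₁*C₂*(G3 η) + C₁*C₂*(G3 (lam - η)) := by
      simp only [hF]; ring
    have nn1 : 0 ≤ C₁*C₂*(r^a * G1 η) := by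
      have := hG1nn η; positivity
    have nn2 : 0 ≤ C₁*C₂*(r^b * G2 (lam - η)) := by
      have := hG2nn (lam - η); positivity
    have nn3 : 0 ≤ C₁*C₂*(G3 η) := by
      have := hG3nn η; positivity
    have nn4 : 0 ≤ C₁*C₂*(G3 (lam - η)) := by
      have := hG3nn (lam - η); positivity
    by_cases hbη : η ∈ ball (0:EuclideanSpace ℝ (Fin n)) r
    · have hηr : ‖η‖ < r := by simpa [mem_ball_zero_iff] using hbη
      have hzr : r ≤ ‖lam - η‖ := by
        have h := norm_sub_norm_le lam η
        have h2 : ‖lam‖ = 2*r := by rw [hr]; ring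
        linarith
      have e1 : f₁ (lam - η) ≤ C₁ * r ^ a := (hb₁ _ hz0).trans
        (mul_le_mul_of_nonneg_left (rpow_le_rpow_of_nonpos hr0 hzr ha0.le) hC₁)
      have e2 : f₂ η ≤ C₂ * ‖η‖ ^ b := hb₂ η hη0
      have key : f₁ (lam - η) * f₂ η ≤ (C₁ * r^a) * (C₂ * ‖η‖ ^ b) :=
        mul_le_mul e1 e2 (hf₂0 η) (by positivity)
      have hG1η : G1 η = ‖η‖ ^ b := indicator_of_mem hbη _
      have : f₁ (lam - η) * f₂ η ≤ C₁*C₂*(r^a * G1 η) := by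
        rw [hG1η]; exact key.trans (le_of_eq (by ring))
      linarith
    · by_cases hbz : (lam - η) ∈ ball (0:EuclideanSpace ℝ (Fin n)) r
      · have hzr : ‖lam - η‖ < r := by simpa [mem_ball_zero_iff] using hbz
        have hηr : r ≤ ‖η‖ := by
          have h := norm_sub_norm_le lam (lam - η)
          rw [_root_.sub_sub_cancel] at h
          have h2 : ‖lam‖ = 2*r := by rw [hr]; ring
          linarith
        have e1 : f₁ (lam - η) ≤ C₁ * ‖lam - η‖ ^ a := hb₁ _ hz0
        have e2 : f₂ η ≤ C₂ * r ^ b := (hb₂ η hη0).trans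
          (mul_le_mul_of_nonneg_left (rpow_le_rpow_of_nonpos hr0 hηr hb0.le) hC₂)
        have key : f₁ (lam - η) * f₂ η ≤ (C₁ * ‖lam - η‖^a) * (C₂ * r ^ b) :=
          mul_le_mul e1 e2 (hf₂0 η) (by positivity)
        have hG2z : G2 (lam - η) = ‖lam - η‖ ^ a := indicator_of_mem hbz _
        have : f₁ (lam - η) * f₂ η ≤ C₁*C₂*(r^b * G2 (lam - η)) := by
          rw [hG2z]; exact key.trans (le_of_eq (by ring))
        linarith
      · have hηr : r ≤ ‖η‖ := by
          have := hbη; rw [mem_ball_zero_iff] at this; linarith [not_lt.mp this]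
        have hzr : r ≤ ‖lam - η‖ := by
          have := hbz; rw [mem_ball_zero_iff] at this; linarith [not_lt.mp this]
        have hηpos : 0 < ‖η‖ := hr0.trans_le hηr
        have hzpos : 0 < ‖lam - η‖ := hr0.trans_le hzr
        rcases le_total ‖η‖ ‖lam - η‖ with hcmp | hcmp
        · have e1 : f₁ (lam - η) ≤ C₁ * ‖η‖ ^ a := (hb₁ _ hz0).trans
            (mul_le_mul_of_nonneg_left (rpow_le_rpow_of_nonpos hηpos hcmp ha0.le) hC₁)
          have e2 : f₂ η ≤ C₂ * ‖η‖ ^ b := hb₂ η hη0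
          have key : f₁ (lam - η) * f₂ η ≤ (C₁ * ‖η‖^a) * (C₂ * ‖η‖ ^ b) :=
            mul_le_mul e1 e2 (hf₂0 η) (by positivity)
          have hG3η : G3 η = ‖η‖ ^ (a+b) := indicator_of_mem (by simpa using hbη) _
          have : f₁ (lam - η) * f₂ η ≤ C₁*C₂*(G3 η) := by
            rw [hG3η, Real.rpow_add hηpos]; exact key.trans (le_of_eq (by ring))
          linarith
        · have e1 : f₁ (lam - η) ≤ C₁ * ‖lam - η‖ ^ a := hb₁ _ hz0
          have e2 : f₂ η ≤ C₂ * ‖lam - η‖ ^ b := (hb₂ η hη0).trans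
            (mul_le_mul_of_nonneg_left (rpow_le_rpow_of_nonpos hzpos hcmp hb0.le) hC₂)
          have key : f₁ (lam - η) * f₂ η ≤ (C₁ * ‖lam - η‖^a) * (C₂ * ‖lam - η‖ ^ b) :=
            mul_le_mul e1 e2 (hf₂0 η) (by positivity)
          have hG3z : G3 (lam - η) = ‖lam - η‖ ^ (a+b) :=
            indicator_of_mem (by simpa using hbz) _
          have : f₁ (lam - η) * f₂ η ≤ C₁*C₂*(G3 (lam - η)) := by
            rw [hG3z, Real.rpow_add hzpos]; exact key.trans (le_of_eq (by ring))
          linarith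
  have hmz : AEStronglyMeasurable (fun η => f₁ (lam - η)) volume :=
    ((Measure.measurePreserving_sub_left volume lam).aestronglyMeasurable_comp_iff
      (MeasurableEquiv.subLeft lam).measurableEmbedding).2 hm₁
  have hint : Integrable (fun η => f₁ (lam - η) * f₂ η) := by
    refine iF.mono' (hmz.mul hm₂) ?_
    filter_upwards [hae] with η h
    rw [Real.norm_eq_abs, abs_of_nonneg (mul_nonneg (hf₁0 _) (hf₂0 _))]
    exact h
  refine ⟨hint, ?_⟩
  have hmono : (∫ η, f₁ (lam - η) * f₂ η) ≤ ∫ η, F η :=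
    integral_mono_of_nonneg
      (Eventually.of_forall fun η => mul_nonneg (hf₁0 _) (hf₂0 _)) iF hae
  have hmemball : ∀ x : EuclideanSpace ℝ (Fin n),
      r • x ∈ ball (0:EuclideanSpace ℝ (Fin n)) r ↔ x ∈ ball (0:EuclideanSpace ℝ (Fin n)) 1 := by
    intro x
    rw [mem_ball_zero_iff, mem_ball_zero_iff, norm_smul, Real.norm_eq_abs, abs_of_pos hr0,
      mul_lt_iff_lt_one_right hr0]
  have I1 : ∫ η, G1 η = r ^ ((n:ℝ)+b) * cb := by
    rw [hG1, integral_indicator measurableSet_ball,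
      aux_scale b hr0 _ _ hmemball measurableSet_ball measurableSet_ball]
  have I2 : ∫ η, G2 η = r ^ ((n:ℝ)+a) * ca := by
    rw [hG2, integral_indicator measurableSet_ball,
      aux_scale a hr0 _ _ hmemball measurableSet_ball measurableSet_ball]
  have I3 : ∫ η, G3 η = r ^ ((n:ℝ)+(a+b)) * cab := by
    rw [hG3, integral_indicator measurableSet_ball.compl,
      aux_scale (a+b) hr0 _ _ (fun x => not_congr (hmemball x))
        measurableSet_ball.compl measurableSet_ball.compl]
  have hIF : ∫ η, F η = C₁ * C₂ * ((ca + cb + 2*cab) * r ^ ((n:ℝ)+a+b)) := by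
    simp only [hF]
    have iA : Integrable (fun η : EuclideanSpace ℝ (Fin n) => r^a * G1 η) := by
      exact iG1.const_mul _
    have iB : Integrable (fun η : EuclideanSpace ℝ (Fin n) => r^b * G2 (lam - η)) := by
      exact (iG2.comp_sub_left lam).const_mul _
    have iC : Integrable (fun η : EuclideanSpace ℝ (Fin n) => G3 η) := iG3
    have iD : Integrable (fun η : EuclideanSpace ℝ (Fin n) => G3 (lam - η)) :=
      iG3.comp_sub_left lam
    have iAB : Integrable (fun η : EuclideanSpace ℝ (Fin n) =>
        r^a * G1 η + r^b * G2 (lam - η)) := by exact iA.add iB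
    have iABC : Integrable (fun η : EuclideanSpace ℝ (Fin n) =>
        r^a * G1 η + r^b * G2 (lam - η) + G3 η) := by exact iAB.add iC
    rw [MeasureTheory.integral_const_mul,
      integral_add iABC iD, integral_add iAB iC, integral_add iA iB,
      MeasureTheory.integral_const_mul, MeasureTheory.integral_const_mul,
      integral_sub_left_eq_self G2 volume lam, integral_sub_left_eq_self G3 volume lam,
      I1, I2, I3]
    rw [show r ^ a * (r ^ ((n:ℝ)+b) * cb) = cb * r^((n:ℝ)+a+b) by
        rw [← mul_assoc, ← Real.rpow_add hr0, show a + ((n:ℝ)+b) = (n:ℝ)+a+b by ring]; ring,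
      show r ^ b * (r ^ ((n:ℝ)+a) * ca) = ca * r^((n:ℝ)+a+b) by
        rw [← mul_assoc, ← Real.rpow_add hr0, show b + ((n:ℝ)+a) = (n:ℝ)+a+b by ring]; ring,
      show ((n:ℝ)+(a+b)) = (n:ℝ)+a+b by ring]
    ring
  have hrm : r ^ ((n:ℝ)+a+b) = ‖lam‖ ^ (κ₁+κ₂-(n:ℝ)) * (2:ℝ) ^ ((n:ℝ)-κ₁-κ₂) := by
    have h1 : ((n:ℝ)+a+b) = κ₁+κ₂-(n:ℝ) := by rw [ha, hb]; ring
    rw [h1, hr, Real.div_rpow (norm_nonneg lam) (by norm_num : (0:ℝ) ≤ 2), div_eq_mul_inv,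
      ← Real.rpow_neg (by norm_num : (0:ℝ) ≤ 2),
      show -(κ₁+κ₂-(n:ℝ)) = (n:ℝ)-κ₁-κ₂ by ring]
  refine hmono.trans_eq ?_
  rw [hIF, hrm]
  ring
set_option maxHeartbeats 1000000 in
theorem convolution_singularity_subcritical
    (n : ℕ) (hn : 1 ≤ n)
    (f₁ f₂ K₁ K₂ : EuclideanSpace ℝ (Fin n) → ℝ) (κ₁ κ₂ : ℝ)
    (hκ₁ : 0 < κ₁) (hκ₂ : 0 < κ₂) (hsub : κ₁ + κ₂ < n)
    (hK₁0 : ∀ lam, 0 ≤ K₁ lam) (hK₂0 : ∀ lam, 0 ≤ K₂ lam)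
    (hK₁b : ∃ C, ∀ lam, K₁ lam ≤ C) (hK₂b : ∃ C, ∀ lam, K₂ lam ≤ C)
    (hK₁c : ContinuousOn K₁ {(0 : EuclideanSpace ℝ (Fin n))}ᶜ)
    (hK₂c : ContinuousOn K₂ {(0 : EuclideanSpace ℝ (Fin n))}ᶜ)
    (hf₁ : ∀ lam, lam ≠ 0 → f₁ lam = K₁ lam / ‖lam‖ ^ ((n : ℝ) - κ₁))
    (hf₂ : ∀ lam, lam ≠ 0 → f₂ lam = K₂ lam / ‖lam‖ ^ ((n : ℝ) - κ₂))
    (hf₁0 : ∀ lam, 0 ≤ f₁ lam) (hf₂0 : ∀ lam, 0 ≤ f₂ lam)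
    (hf₁i : Integrable f₁) (hf₂i : Integrable f₂) :
    ∃ B : EuclideanSpace ℝ (Fin n) → ℝ,
      (∃ C, ∀ lam, |B lam| ≤ C) ∧
      ContinuousOn B {(0 : EuclideanSpace ℝ (Fin n))}ᶜ ∧
      ∀ lam, lam ≠ 0 →
        (∫ η, f₁ (lam - η) * f₂ η) = B lam * ‖lam‖ ^ (κ₁ + κ₂ - n) := by
  classical
  obtain ⟨C₁, hC₁⟩ := hK₁b
  obtain ⟨C₂, hC₂⟩ := hK₂b
  have hC₁0 : 0 ≤ C₁ := (hK₁0 0).trans (hC₁ 0)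
  have hC₂0 : 0 ≤ C₂ := (hK₂0 0).trans (hC₂ 0)
  have hb₁ : ∀ z : EuclideanSpace ℝ (Fin n), z ≠ 0 → f₁ z ≤ C₁ * ‖z‖ ^ (κ₁ - (n:ℝ)) := by
    intro z hz
    have hzpos : 0 < ‖z‖ := norm_pos_iff.2 hz
    rw [hf₁ z hz, div_eq_mul_inv, ← Real.rpow_neg hzpos.le,
      show -((n:ℝ) - κ₁) = κ₁ - (n:ℝ) by ring]
    exact mul_le_mul_of_nonneg_right (hC₁ z) (rpow_nonneg hzpos.le _)
  have hb₂ : ∀ z : EuclideanSpace ℝ (Fin n), z ≠ 0 → f₂ z ≤ C₂ * ‖z‖ ^ (κ₂ - (n:ℝ)) := by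
    intro z hz
    have hzpos : 0 < ‖z‖ := norm_pos_iff.2 hz
    rw [hf₂ z hz, div_eq_mul_inv, ← Real.rpow_neg hzpos.le,
      show -((n:ℝ) - κ₂) = κ₂ - (n:ℝ) by ring]
    exact mul_le_mul_of_nonneg_right (hC₂ z) (rpow_nonneg hzpos.le _)
  obtain ⟨M, hM0, hM⟩ := key_bound hn f₁ f₂ κ₁ κ₂ C₁ C₂ hκ₁ hκ₂ hsub hC₁0 hC₂0 hb₁ hb₂
    hf₁0 hf₂0 hf₁i.aestronglyMeasurable hf₂i.aestronglyMeasurable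
  set g : EuclideanSpace ℝ (Fin n) → ℝ := fun lam => ∫ η, f₁ (lam - η) * f₂ η with hg
  -- continuity of f₁, f₂ away from 0
  have hf₁c : ContinuousOn f₁ {(0:EuclideanSpace ℝ (Fin n))}ᶜ := by
    refine ContinuousOn.congr (ContinuousOn.div hK₁c
      ((continuous_norm.continuousOn).rpow_const fun z hz =>
        Or.inl (norm_ne_zero_iff.mpr hz)) fun z hz =>
        (Real.rpow_pos_of_pos (norm_pos_iff.2 hz) _).ne') fun z hz => hf₁ z hz
  have hf₂c : ContinuousOn f₂ {(0:EuclideanSpace ℝ (Fin n))}ᶜ := by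
    refine ContinuousOn.congr (ContinuousOn.div hK₂c
      ((continuous_norm.continuousOn).rpow_const fun z hz =>
        Or.inl (norm_ne_zero_iff.mpr hz)) fun z hz =>
        (Real.rpow_pos_of_pos (norm_pos_iff.2 hz) _).ne') fun z hz => hf₂ z hz
  -- continuity of g away from 0
  have hgc : ∀ lam0 : EuclideanSpace ℝ (Fin n), lam0 ≠ 0 → ContinuousAt g lam0 := by
    intro lam0 hlam0
    set R : ℝ := ‖lam0‖ with hRdef
    have hR0 : 0 < R := norm_pos_iff.2 hlam0
    set r : ℝ := R/8 with hrdef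
    have hr0 : 0 < r := by positivity
    set χ : EuclideanSpace ℝ (Fin n) → ℝ := fun x => max 0 (min 1 (2 - ‖x‖/r)) with hχdef
    have hχc : Continuous χ :=
      continuous_const.max (continuous_const.min (continuous_const.sub
        (continuous_norm.div_const r)))
    have hχ01 : ∀ x, 0 ≤ χ x ∧ χ x ≤ 1 := fun x =>
      ⟨le_max_left _ _, max_le (by norm_num) (min_le_left _ _)⟩
    have hχ1 : ∀ x : EuclideanSpace ℝ (Fin n), ‖x‖ ≤ r → χ x = 1 := by
      intro x hx
      have h1 : ‖x‖/r ≤ 1 := (div_le_one hr0).2 hx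
      have h2 : (1:ℝ) ≤ 2 - ‖x‖/r := by linarith
      rw [hχdef]
      simp only [min_eq_left h2]
      norm_num
    have hχ0 : ∀ x : EuclideanSpace ℝ (Fin n), 2*r ≤ ‖x‖ → χ x = 0 := by
      intro x hx
      have h2 : 2 - ‖x‖/r ≤ 0 := by
        rw [sub_nonpos, le_div_iff₀ hr0]; linarith
      have h3 : min 1 (2 - ‖x‖/r) ≤ 0 := le_trans (min_le_right _ _) h2
      rw [hχdef]
      simp only [max_eq_left h3]
    set f₁' : EuclideanSpace ℝ (Fin n) → ℝ := fun x => χ x * f₁ x with hf₁'def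
    set f₁'' : EuclideanSpace ℝ (Fin n) → ℝ := fun x => (1 - χ x) * f₁ x with hf₁''def
    have hsumf : ∀ x, f₁' x + f₁'' x = f₁ x := by
      intro x; simp only [hf₁'def, hf₁''def]; ring
    have hf₁''0 : ∀ x, 0 ≤ f₁'' x := fun x =>
      mul_nonneg (by linarith [(hχ01 x).2]) (hf₁0 x)
    have hf₁''le : ∀ x, f₁'' x ≤ f₁ x := fun x =>
      mul_le_of_le_one_left (hf₁0 x) (by linarith [(hχ01 x).1])
    have if₁' : Integrable f₁' :=
      hf₁i.bdd_mul (c := 1) hχc.aestronglyMeasurable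
        (Eventually.of_forall fun x => by rw [Real.norm_eq_abs, abs_of_nonneg (hχ01 x).1]; exact (hχ01 x).2)
    have hf₁''b : ∀ x, ‖f₁'' x‖ ≤ C₁ * r ^ (κ₁ - (n:ℝ)) := by
      intro x
      rw [Real.norm_eq_abs, abs_of_nonneg (hf₁''0 x)]
      by_cases hx : ‖x‖ ≤ r
      · rw [hf₁''def]
        simp only [hχ1 x hx, sub_self, zero_mul]
        positivity
      · push_neg at hx
        have hx0 : x ≠ 0 := by
          intro hc; rw [hc, norm_zero] at hx; exact absurd hx (not_lt.2 hr0.le)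
        calc f₁'' x ≤ f₁ x := hf₁''le x
          _ ≤ C₁ * ‖x‖ ^ (κ₁ - (n:ℝ)) := hb₁ x hx0
          _ ≤ C₁ * r ^ (κ₁ - (n:ℝ)) := mul_le_mul_of_nonneg_left
              (rpow_le_rpow_of_nonpos hr0 hx.le (by push_cast; linarith)) hC₁0
    have hf₁''c : Continuous f₁'' := by
      rw [continuous_iff_continuousAt]
      intro x
      by_cases hx : x = 0
      · subst hx
        have hev : f₁'' =ᶠ[nhds (0:EuclideanSpace ℝ (Fin n))] (fun _ => (0:ℝ)) := by
          filter_upwards [Metric.ball_mem_nhds (0:EuclideanSpace ℝ (Fin n)) hr0] with y hy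
          have : ‖y‖ < r := by simpa [mem_ball_zero_iff] using hy
          simp only [hf₁''def, hχ1 y this.le, sub_self, zero_mul]
        exact continuousAt_const.congr hev.symm
      · exact ((continuous_const.sub hχc).continuousAt).mul
          (hf₁c.continuousAt (isOpen_compl_singleton.mem_nhds hx))
    -- the far cutoff
    set ψ : EuclideanSpace ℝ (Fin n) → ℝ := fun x => max 0 (min 1 (4*‖x‖/R - 1)) with hψdef
    have hψc : Continuous ψ :=
      continuous_const.max (continuous_const.min
        (((continuous_const.mul continuous_norm).div_const R).sub continuous_const))
    have hψ01 : ∀ x, 0 ≤ ψ x ∧ ψ x ≤ 1 := fun x =>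
      ⟨le_max_left _ _, max_le (by norm_num) (min_le_left _ _)⟩
    have hψ1 : ∀ x : EuclideanSpace ℝ (Fin n), R/2 ≤ ‖x‖ → ψ x = 1 := by
      intro x hx
      have h1 : (1:ℝ) ≤ 4*‖x‖/R - 1 := by
        rw [le_sub_iff_add_le, le_div_iff₀ hR0]; linarith
      rw [hψdef]
      simp only [min_eq_left h1]
      norm_num
    have hψ0 : ∀ x : EuclideanSpace ℝ (Fin n), ‖x‖ ≤ R/4 → ψ x = 0 := by
      intro x hx
      have h2 : 4*‖x‖/R - 1 ≤ 0 := by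
        rw [sub_nonpos, div_le_one hR0]; linarith
      have h3 : min 1 (4*‖x‖/R - 1) ≤ 0 := le_trans (min_le_right _ _) h2
      rw [hψdef]
      simp only [max_eq_left h3]
    set h : EuclideanSpace ℝ (Fin n) → ℝ := fun x => ψ x * f₂ x with hhdef
    have hh0 : ∀ x, 0 ≤ h x := fun x => mul_nonneg (hψ01 x).1 (hf₂0 x)
    have hhle : ∀ x, h x ≤ f₂ x := fun x =>
      mul_le_of_le_one_left (hf₂0 x) (hψ01 x).2
    have hhb : ∀ x, ‖h x‖ ≤ C₂ * (R/4) ^ (κ₂ - (n:ℝ)) := by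
      intro x
      rw [Real.norm_eq_abs, abs_of_nonneg (hh0 x)]
      by_cases hx : ‖x‖ ≤ R/4
      · rw [hhdef]
        simp only [hψ0 x hx, zero_mul]
        positivity
      · push_neg at hx
        have hx0 : x ≠ 0 := by
          intro hc; rw [hc, norm_zero] at hx
          exact absurd hx (not_lt.2 (by positivity))
        calc h x ≤ f₂ x := hhle x
          _ ≤ C₂ * ‖x‖ ^ (κ₂ - (n:ℝ)) := hb₂ x hx0
          _ ≤ C₂ * (R/4) ^ (κ₂ - (n:ℝ)) := mul_le_mul_of_nonneg_left
              (rpow_le_rpow_of_nonpos (by positivity) hx.le (by push_cast; linarith)) hC₂0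
    have hhc : Continuous h := by
      rw [continuous_iff_continuousAt]
      intro x
      by_cases hx : x = 0
      · subst hx
        have hev : h =ᶠ[nhds (0:EuclideanSpace ℝ (Fin n))] (fun _ => (0:ℝ)) := by
          filter_upwards [Metric.ball_mem_nhds (0:EuclideanSpace ℝ (Fin n)) (by positivity :
            (0:ℝ) < R/4)] with y hy
          have : ‖y‖ < R/4 := by simpa [mem_ball_zero_iff] using hy
          simp only [hhdef, hψ0 y this.le, zero_mul]
        exact continuousAt_const.congr hev.symm
      · exact (hψc.continuousAt).mul
          (hf₂c.continuousAt (isOpen_compl_singleton.mem_nhds hx))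
    -- the two continuous pieces
    have cont1 : Continuous (fun lam => ∫ η, h η * f₁' (lam - η)) := by
      have hbdd : BddAbove (Set.range fun x => ‖h x‖) := by
        refine ⟨C₂ * (R/4) ^ (κ₂ - (n:ℝ)), ?_⟩
        rintro x ⟨y, rfl⟩
        exact hhb y
      have hc := hbdd.continuous_convolution_left_of_integrable
        (ContinuousLinearMap.mul ℝ ℝ) hhc if₁'
      have : MeasureTheory.convolution h f₁' (ContinuousLinearMap.mul ℝ ℝ) volume =
          fun lam => ∫ η, h η * f₁' (lam - η) := by
        funext lam
        simp only [MeasureTheory.convolution, ContinuousLinearMap.mul_apply']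
      rwa [this] at hc
    have cont2 : Continuous (fun lam => ∫ η, f₂ η * f₁'' (lam - η)) := by
      have hbdd : BddAbove (Set.range fun x => ‖f₁'' x‖) := by
        refine ⟨C₁ * r ^ (κ₁ - (n:ℝ)), ?_⟩
        rintro x ⟨y, rfl⟩
        exact hf₁''b y
      have hc := hbdd.continuous_convolution_right_of_integrable
        (ContinuousLinearMap.mul ℝ ℝ) hf₂i hf₁''c
      have : MeasureTheory.convolution f₂ f₁'' (ContinuousLinearMap.mul ℝ ℝ) volume =
          fun lam => ∫ η, f₂ η * f₁'' (lam - η) := by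
        funext lam
        simp only [MeasureTheory.convolution, ContinuousLinearMap.mul_apply']
      rwa [this] at hc
    -- local identity
    have heq : ∀ lam ∈ ball lam0 r,
        g lam = (∫ η, h η * f₁' (lam - η)) + ∫ η, f₂ η * f₁'' (lam - η) := by
      intro lam hlam
      have hd : ‖lam - lam0‖ < r := by
        rw [mem_ball, dist_eq_norm] at hlam; exact hlam
      have hlnorm : R - r ≤ ‖lam‖ := by
        have h1 := norm_sub_norm_le lam0 lam
        have h2 : ‖lam0 - lam‖ = ‖lam - lam0‖ := norm_sub_rev _ _
        linarith
      have hlam0' : lam ≠ 0 := by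
        intro hc; rw [hc, norm_zero] at hlnorm
        have : R - r = 7*r := by rw [hrdef]; ring
        linarith
      have hpt : ∀ η, f₁ (lam - η) * f₂ η
          = h η * f₁' (lam - η) + f₂ η * f₁'' (lam - η) := by
        intro η
        have hkey : f₁' (lam - η) * f₂ η = h η * f₁' (lam - η) := by
          by_cases hψη : ψ η = 1
          · rw [hhdef]
            simp only [hψη, one_mul]
            ring
          · have hηn : ‖η‖ < R/2 := by
              by_contra hc
              push_neg at hc
              exact hψη (hψ1 η hc)
            have hfar : 2*r ≤ ‖lam - η‖ := by
              have h1 := norm_sub_norm_le lam η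
              have h8 : R = 8*r := by rw [hrdef]; ring
              linarith
            have : f₁' (lam - η) = 0 := by
              rw [hf₁'def]
              simp only [hχ0 _ hfar, zero_mul]
            rw [this]
            ring
        calc f₁ (lam - η) * f₂ η = (f₁' (lam - η) + f₁'' (lam - η)) * f₂ η := by
              rw [hsumf]
          _ = h η * f₁' (lam - η) + f₂ η * f₁'' (lam - η) := by
              rw [add_mul, hkey]; ring
      have hint := (hM lam hlam0').1
      have hi2 : Integrable (fun η => f₂ η * f₁'' (lam - η)) := by
        refine hint.mono' (hf₂i.aestronglyMeasurable.mul
          ((hf₁''c.comp (continuous_const.sub continuous_id)).aestronglyMeasurable)) ?_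
        filter_upwards with η
        rw [Real.norm_eq_abs, abs_of_nonneg (mul_nonneg (hf₂0 η) (hf₁''0 _))]
        calc f₂ η * f₁'' (lam - η) ≤ f₂ η * f₁ (lam - η) :=
              mul_le_mul_of_nonneg_left (hf₁''le _) (hf₂0 η)
          _ = f₁ (lam - η) * f₂ η := mul_comm _ _
      have hi1 : Integrable (fun η => h η * f₁' (lam - η)) := by
        have heqf : (fun η => h η * f₁' (lam - η))
            = fun η => f₁ (lam - η) * f₂ η - f₂ η * f₁'' (lam - η) := by
          funext η; rw [hpt η]; ring
        rw [heqf]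
        exact hint.sub hi2
      have hgl : g lam = ∫ η, (h η * f₁' (lam - η) + f₂ η * f₁'' (lam - η)) := by
        simp only [hg]
        exact integral_congr_ae (Eventually.of_forall fun η => hpt η)
      rw [hgl, integral_add hi1 hi2]
    have hev : g =ᶠ[nhds lam0]
        (fun lam => (∫ η, h η * f₁' (lam - η)) + ∫ η, f₂ η * f₁'' (lam - η)) := by
      filter_upwards [Metric.ball_mem_nhds lam0 hr0] with lam hlam using heq lam hlam
    exact ((cont1.add cont2).continuousAt).congr hev.symm
  -- assemble B
  refine ⟨fun lam => g lam * ‖lam‖ ^ ((n:ℝ) - κ₁ - κ₂), ⟨M, ?_⟩, ?_, ?_⟩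
  · intro lam
    by_cases hlam : lam = 0
    · rw [hlam]
      simp only [norm_zero]
      rw [Real.zero_rpow (by push_cast; intro hc; linarith [hc] : ((n:ℝ) - κ₁ - κ₂) ≠ 0), mul_zero,
        abs_zero]
      exact hM0
    · have hg0 : 0 ≤ g lam := integral_nonneg fun η => mul_nonneg (hf₁0 _) (hf₂0 _)
      have hnorm : 0 < ‖lam‖ := norm_pos_iff.2 hlam
      rw [abs_of_nonneg (mul_nonneg hg0 (rpow_nonneg (norm_nonneg _) _))]
      calc g lam * ‖lam‖ ^ ((n:ℝ) - κ₁ - κ₂)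
          ≤ (M * ‖lam‖ ^ (κ₁ + κ₂ - (n:ℝ))) * ‖lam‖ ^ ((n:ℝ) - κ₁ - κ₂) :=
            mul_le_mul_of_nonneg_right ((hM lam hlam).2) (rpow_nonneg (norm_nonneg _) _)
        _ = M := by
            rw [mul_assoc, ← Real.rpow_add hnorm,
              show (κ₁ + κ₂ - (n:ℝ)) + ((n:ℝ) - κ₁ - κ₂) = 0 by ring, Real.rpow_zero, mul_one]
  · refine ContinuousOn.mul ?_ ((continuous_norm.continuousOn).rpow_const fun x hx =>
      Or.inl (norm_ne_zero_iff.2 hx))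
    intro lam0 hlam0
    exact (hgc lam0 hlam0).continuousWithinAt
  · intro lam hlam
    have hnorm : 0 < ‖lam‖ := norm_pos_iff.2 hlam
    rw [mul_assoc, ← Real.rpow_add hnorm,
      show ((n:ℝ) - κ₁ - κ₂) + (κ₁ + κ₂ - (n:ℝ)) = 0 by ring, Real.rpow_zero, mul_one]
end

section
/- Suppose f₁, f₂ : ℝⁿ → [0,∞) satisfy fⱼ(λ) = Kⱼ(λ)/|λ|^{n−κⱼ} with κⱼ > 0 and κ₁ + κ₂ = n, where K₁, K₂ are nonnegative bounded continuous functions on ℝⁿ \ {0} and f₁, f₂ ∈ L¹(ℝⁿ). Then there is a constant C such that the convolution g(λ) = ∫ f₁(λ−η) f₂(η) dη satisfies g(λ) ≤ C · ln(2 + 1/|λ|) for all λ ≠ 0. -/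
open Real MeasureTheory

open Metric Set

variable {n : ℕ}

local notation "E" n => EuclideanSpace ℝ (Fin n)

lemma euclid_nontrivial (hn : 1 ≤ n) : Nontrivial (EuclideanSpace ℝ (Fin n)) :=
  Module.nontrivial_of_finrank_pos (R := ℝ) (by rw [finrank_euclideanSpace_fin]; omega)

lemma polar_eval (hn : 1 ≤ n) (f : ℝ → ℝ) :
    ∫ x : EuclideanSpace ℝ (Fin n), f ‖x‖ =
      ((n : ℝ) * (volume (ball (0 : EuclideanSpace ℝ (Fin n)) 1)).toReal) *
        ∫ y in Ioi (0:ℝ), y ^ (n - 1) * f y := by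
  haveI := euclid_nontrivial hn
  have h := MeasureTheory.integral_fun_norm_addHaar (volume : Measure (EuclideanSpace ℝ (Fin n))) f
  rw [finrank_euclideanSpace_fin] at h
  simpa [nsmul_eq_mul, smul_eq_mul, integral_const_mul, mul_assoc, Measure.real] using h

lemma ball_rpow_eval (hn : 1 ≤ n) {s R : ℝ} (hs : 0 < s + n) (hR : 0 < R) :
    IntegrableOn (fun x : EuclideanSpace ℝ (Fin n) => ‖x‖ ^ s)
      (ball (0 : EuclideanSpace ℝ (Fin n)) R) ∧
    ∫ x in ball (0 : EuclideanSpace ℝ (Fin n)) R, ‖x‖ ^ s =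
      ((n : ℝ) * (volume (ball (0 : EuclideanSpace ℝ (Fin n)) 1)).toReal) *
        (R ^ (s + n) / (s + n)) := by
  haveI := euclid_nontrivial hn
  set c : ℝ := (n : ℝ) * (volume (ball (0 : EuclideanSpace ℝ (Fin n)) 1)).toReal with hc
  have hcpos : 0 < c := by
    apply mul_pos (by exact_mod_cast Nat.lt_of_lt_of_le Nat.zero_lt_one hn)
    exact ENNReal.toReal_pos (measure_ball_pos volume _ one_pos).ne' measure_ball_lt_top.ne
  set f : ℝ → ℝ := (Ioo (0:ℝ) R).indicator (fun y => y ^ s) with hf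
  have hae : (fun x : EuclideanSpace ℝ (Fin n) => f ‖x‖) =ᵐ[volume]
      (ball (0 : EuclideanSpace ℝ (Fin n)) R).indicator (fun x => ‖x‖ ^ s) := by
    have h0 : ∀ᵐ x : EuclideanSpace ℝ (Fin n) ∂volume, x ≠ 0 := by
      refine (ae_iff).2 ?_
      simpa using measure_singleton (0 : EuclideanSpace ℝ (Fin n))
    filter_upwards [h0] with x hx
    have hnx : 0 < ‖x‖ := norm_pos_iff.2 hx
    by_cases hmem : x ∈ ball (0 : EuclideanSpace ℝ (Fin n)) R
    · have : ‖x‖ ∈ Ioo (0:ℝ) R := ⟨hnx, by simpa [mem_ball, dist_eq_norm] using hmem⟩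
      simp [hf, indicator_of_mem, this, hmem]
    · have : ‖x‖ ∉ Ioo (0:ℝ) R := by
        simp only [mem_Ioo, not_and]; intro _
        simpa [mem_ball, dist_eq_norm, not_lt] using hmem
      simp [hf, indicator_of_notMem, this, hmem]
  have h1d : ∫ y in Ioi (0:ℝ), y ^ (n - 1) * f y = R ^ (s + n) / (s + n) := by
    have e1 : ∀ y : ℝ, y ^ (n - 1) * f y = (Ioo (0:ℝ) R).indicator (fun y => y ^ (n-1) * y ^ s) y := by
      intro y; by_cases hy : y ∈ Ioo (0:ℝ) R <;> simp [hf, hy]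
    rw [integral_congr_ae (Filter.Eventually.of_forall fun y => e1 y),
      setIntegral_indicator measurableSet_Ioo,
      inter_eq_right.2 (Ioo_subset_Ioi_self)]
    have e2 : ∫ y in Ioo (0:ℝ) R, y ^ (n-1) * y ^ s = ∫ y in Ioo (0:ℝ) R, y ^ ((n:ℝ) - 1 + s) := by
      refine setIntegral_congr_fun measurableSet_Ioo fun y hy => ?_
      rw [← Real.rpow_natCast y (n-1), ← Real.rpow_add hy.1]
      congr 1
      push_cast [Nat.cast_sub hn]
      ring
    rw [e2, ← integral_Ioc_eq_integral_Ioo, ← intervalIntegral.integral_of_le hR.le,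
      integral_rpow (Or.inl (by linarith))]
    rw [Real.zero_rpow (by linarith : (n:ℝ) - 1 + s + 1 ≠ 0)]
    rw [show (n:ℝ) - 1 + s + 1 = s + n by ring]
    ring
  have heq : ∫ x in ball (0 : EuclideanSpace ℝ (Fin n)) R, ‖x‖ ^ s = c * (R ^ (s + n) / (s + n)) := by
    rw [← integral_indicator measurableSet_ball, ← integral_congr_ae hae, polar_eval hn f, h1d]
  refine ⟨(integrable_indicator_iff measurableSet_ball).mp ?_, heq⟩
  by_contra hni
  rw [← integral_indicator measurableSet_ball, integral_undef hni] at heq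
  have : 0 < c * (R ^ (s + n) / (s + n)) :=
    mul_pos hcpos (div_pos (Real.rpow_pos_of_pos hR _) hs)
  linarith [this, heq]

lemma shell_measurable (a b : ℝ) :
    MeasurableSet {x : EuclideanSpace ℝ (Fin n) | a ≤ ‖x‖ ∧ ‖x‖ < b} := by
  have : {x : EuclideanSpace ℝ (Fin n) | a ≤ ‖x‖ ∧ ‖x‖ < b} =
      (fun x : EuclideanSpace ℝ (Fin n) => ‖x‖) ⁻¹' (Ico a b) := rfl
  rw [this]
  exact measurable_norm measurableSet_Ico

lemma shell_rpow_eval (hn : 1 ≤ n) {a b : ℝ} (ha : 0 < a) (hab : a ≤ b) :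
    IntegrableOn (fun x : EuclideanSpace ℝ (Fin n) => ‖x‖ ^ (-(n:ℝ)))
      {x : EuclideanSpace ℝ (Fin n) | a ≤ ‖x‖ ∧ ‖x‖ < b} ∧
    ∫ x in {x : EuclideanSpace ℝ (Fin n) | a ≤ ‖x‖ ∧ ‖x‖ < b}, ‖x‖ ^ (-(n:ℝ)) =
      ((n : ℝ) * (volume (ball (0 : EuclideanSpace ℝ (Fin n)) 1)).toReal) * Real.log (b / a) := by
  haveI := euclid_nontrivial hn
  set S : Set (EuclideanSpace ℝ (Fin n)) := {x | a ≤ ‖x‖ ∧ ‖x‖ < b} with hS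
  have hSm : MeasurableSet S := shell_measurable a b
  set c : ℝ := (n : ℝ) * (volume (ball (0 : EuclideanSpace ℝ (Fin n)) 1)).toReal with hc
  have hcpos : 0 < c := by
    apply mul_pos (by exact_mod_cast Nat.lt_of_lt_of_le Nat.zero_lt_one hn)
    exact ENNReal.toReal_pos (measure_ball_pos volume _ one_pos).ne' measure_ball_lt_top.ne
  set f : ℝ → ℝ := (Ico a b).indicator (fun y => y ^ (-(n:ℝ))) with hf
  have hfx : ∀ x : EuclideanSpace ℝ (Fin n), f ‖x‖ = S.indicator (fun x => ‖x‖ ^ (-(n:ℝ))) x := by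
    intro x
    by_cases hx : x ∈ S
    · rw [indicator_of_mem hx]
      exact indicator_of_mem (by exact ⟨hx.1, hx.2⟩) _
    · rw [indicator_of_notMem hx]
      exact indicator_of_notMem (by simpa [hS, mem_Ico] using hx) _
  have h1d : ∫ y in Ioi (0:ℝ), y ^ (n - 1) * f y = Real.log (b / a) := by
    have e1 : ∀ y : ℝ, y ^ (n - 1) * f y = (Ico a b).indicator (fun y => y ^ (n-1) * y ^ (-(n:ℝ))) y := by
      intro y; by_cases hy : y ∈ Ico a b <;> simp [hf, hy]
    rw [integral_congr_ae (Filter.Eventually.of_forall fun y => e1 y),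
      setIntegral_indicator measurableSet_Ico,
      inter_eq_right.2 (show Ico a b ⊆ Ioi 0 from fun y hy => lt_of_lt_of_le ha hy.1)]
    have e2 : ∫ y in Ico a b, y ^ (n-1) * y ^ (-(n:ℝ)) = ∫ y in Ico a b, y⁻¹ := by
      refine setIntegral_congr_fun measurableSet_Ico fun y hy => ?_
      have hy0 : 0 < y := lt_of_lt_of_le ha hy.1
      rw [← Real.rpow_natCast y (n-1), ← Real.rpow_add hy0]
      rw [show ((n-1 : ℕ) : ℝ) + (-(n:ℝ)) = -1 by push_cast [Nat.cast_sub hn]; ring]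
      exact Real.rpow_neg_one y
    rw [e2, Measure.restrict_congr_set Ico_ae_eq_Ioc, ← intervalIntegral.integral_of_le hab,
      integral_inv (by simp [Set.uIcc_of_le hab]; intro h; linarith)]
  have heq : ∫ x in S, ‖x‖ ^ (-(n:ℝ)) = c * Real.log (b / a) := by
    rw [← integral_indicator hSm,
      ← integral_congr_ae (Filter.Eventually.of_forall fun x => hfx x), polar_eval hn f, h1d]
  refine ⟨?_, heq⟩
  rcases eq_or_lt_of_le hab with rfl | hlt
  · have : S = ∅ := by
      ext x; simp only [hS, mem_setOf_eq, mem_empty_iff_false, iff_false, not_and, not_lt]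
      exact fun h => h
    rw [this]; exact integrableOn_empty
  · refine (integrable_indicator_iff hSm).mp ?_
    by_contra hni
    rw [← integral_indicator hSm, integral_undef hni] at heq
    have : 0 < c * Real.log (b / a) :=
      mul_pos hcpos (Real.log_pos ((one_lt_div ha).mpr hlt))
    linarith [this, heq]

set_option maxHeartbeats 2000000 in
theorem convolution_singularity_critical
    (n : ℕ) (hn : 1 ≤ n)
    (f₁ f₂ K₁ K₂ : EuclideanSpace ℝ (Fin n) → ℝ) (κ₁ κ₂ : ℝ)
    (hκ₁ : 0 < κ₁) (hκ₂ : 0 < κ₂) (hcrit : κ₁ + κ₂ = n)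
    (hK₁0 : ∀ lam, 0 ≤ K₁ lam) (hK₂0 : ∀ lam, 0 ≤ K₂ lam)
    (hK₁b : ∃ C, ∀ lam, K₁ lam ≤ C) (hK₂b : ∃ C, ∀ lam, K₂ lam ≤ C)
    (hK₁c : ContinuousOn K₁ {(0 : EuclideanSpace ℝ (Fin n))}ᶜ)
    (hK₂c : ContinuousOn K₂ {(0 : EuclideanSpace ℝ (Fin n))}ᶜ)
    (hf₁ : ∀ lam, lam ≠ 0 → f₁ lam = K₁ lam / ‖lam‖ ^ ((n : ℝ) - κ₁))
    (hf₂ : ∀ lam, lam ≠ 0 → f₂ lam = K₂ lam / ‖lam‖ ^ ((n : ℝ) - κ₂))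
    (hf₁0 : ∀ lam, 0 ≤ f₁ lam) (hf₂0 : ∀ lam, 0 ≤ f₂ lam)
    (hf₁i : Integrable f₁) (hf₂i : Integrable f₂) :
    ∃ C : ℝ, ∀ lam : EuclideanSpace ℝ (Fin n), lam ≠ 0 →
      (∫ η, f₁ (lam - η) * f₂ η) ≤ C * Real.log (2 + 1 / ‖lam‖) := by
  classical
  haveI := euclid_nontrivial (n := n) hn
  obtain ⟨M₁, hM₁⟩ := hK₁b
  obtain ⟨M₂, hM₂⟩ := hK₂b
  set M : ℝ := max (max M₁ M₂) 0 with hM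
  have hM0 : 0 ≤ M := le_max_right _ _
  have hK₁M : ∀ x, K₁ x ≤ M := fun x => (hM₁ x).trans ((le_max_left _ _).trans (le_max_left _ _))
  have hK₂M : ∀ x, K₂ x ≤ M := fun x => (hM₂ x).trans ((le_max_right _ _).trans (le_max_left _ _))
  have hκ₁n : κ₁ - (n:ℝ) ≤ 0 := by linarith
  have hκ₂n : κ₂ - (n:ℝ) ≤ 0 := by linarith
  -- pointwise bounds
  have hb₁ : ∀ x : EuclideanSpace ℝ (Fin n), x ≠ 0 → f₁ x ≤ M * ‖x‖ ^ (κ₁ - (n:ℝ)) := by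
    intro x hx
    have hnx : 0 < ‖x‖ := norm_pos_iff.2 hx
    have hp : 0 < ‖x‖ ^ ((n:ℝ) - κ₁) := Real.rpow_pos_of_pos hnx _
    rw [hf₁ x hx, div_le_iff₀ hp]
    calc K₁ x ≤ M := hK₁M x
      _ = M * (‖x‖ ^ (κ₁ - (n:ℝ)) * ‖x‖ ^ ((n:ℝ) - κ₁)) := by
          rw [← Real.rpow_add hnx]
          norm_num
      _ = M * ‖x‖ ^ (κ₁ - (n:ℝ)) * ‖x‖ ^ ((n:ℝ) - κ₁) := by ring
  have hb₂ : ∀ x : EuclideanSpace ℝ (Fin n), x ≠ 0 → f₂ x ≤ M * ‖x‖ ^ (κ₂ - (n:ℝ)) := by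
    intro x hx
    have hnx : 0 < ‖x‖ := norm_pos_iff.2 hx
    have hp : 0 < ‖x‖ ^ ((n:ℝ) - κ₂) := Real.rpow_pos_of_pos hnx _
    rw [hf₂ x hx, div_le_iff₀ hp]
    calc K₂ x ≤ M := hK₂M x
      _ = M * (‖x‖ ^ (κ₂ - (n:ℝ)) * ‖x‖ ^ ((n:ℝ) - κ₂)) := by
          rw [← Real.rpow_add hnx]
          norm_num
      _ = M * ‖x‖ ^ (κ₂ - (n:ℝ)) * ‖x‖ ^ ((n:ℝ) - κ₂) := by ring
  set vB : ℝ := (volume (ball (0 : EuclideanSpace ℝ (Fin n)) 1)).toReal with hvB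
  have hvB0 : 0 ≤ vB := ENNReal.toReal_nonneg
  set cn : ℝ := (n : ℝ) * vB with hcn
  have hcn0 : 0 ≤ cn := mul_nonneg (Nat.cast_nonneg n) hvB0
  have hIf₂ : 0 ≤ ∫ η, f₂ η := integral_nonneg hf₂0
  set C₀ : ℝ := M^2*cn/κ₂ + M^2*cn/κ₁ + M^2*vB*(4:ℝ)^(n:ℝ)
      + M*2^((n:ℝ)-κ₁)*(∫ η, f₂ η) with hC₀
  have hC₀0 : 0 ≤ C₀ := by
    have : (0:ℝ) ≤ (4:ℝ)^(n:ℝ) := (Real.rpow_pos_of_pos (by norm_num) _).le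
    have : (0:ℝ) ≤ (2:ℝ)^((n:ℝ)-κ₁) := (Real.rpow_pos_of_pos (by norm_num) _).le
    positivity
  set C₄ : ℝ := M^2*2^((n:ℝ)-κ₁)*cn with hC₄
  have hC₄0 : 0 ≤ C₄ := by
    have : (0:ℝ) ≤ (2:ℝ)^((n:ℝ)-κ₁) := (Real.rpow_pos_of_pos (by norm_num) _).le
    positivity
  refine ⟨C₀ / Real.log 2 + C₄, ?_⟩
  intro lam hlam
  set r : ℝ := ‖lam‖ with hrdef
  have hr : 0 < r := norm_pos_iff.2 hlam
  have hr2 : 0 < r/2 := by linarith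
  set b : ℝ := max (2*r) 1 with hbdef
  have hb2r : 2*r ≤ b := le_max_left _ _
  have hb1 : 1 ≤ b := le_max_right _ _
  -- piece functions
  set g1 : EuclideanSpace ℝ (Fin n) → ℝ :=
    fun η => M^2 * (r/2)^(κ₁-(n:ℝ)) * ‖η‖^(κ₂-(n:ℝ)) with hg1
  set ψ : EuclideanSpace ℝ (Fin n) → ℝ :=
    (ball (0:EuclideanSpace ℝ (Fin n)) (r/2)).indicator
      (fun u => M^2 * (r/2)^(κ₂-(n:ℝ)) * ‖u‖^(κ₁-(n:ℝ))) with hψ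
  set g3 : ℝ := M^2 * (r/2)^(κ₁-(n:ℝ)) * (r/2)^(κ₂-(n:ℝ)) with hg3
  set g4 : EuclideanSpace ℝ (Fin n) → ℝ :=
    fun η => M^2 * 2^((n:ℝ)-κ₁) * ‖η‖^(-(n:ℝ)) with hg4
  set g5 : EuclideanSpace ℝ (Fin n) → ℝ :=
    fun η => M * 2^((n:ℝ)-κ₁) * f₂ η with hg5
  set A1 : Set (EuclideanSpace ℝ (Fin n)) := ball 0 (r/2) with hA1
  set A3 : Set (EuclideanSpace ℝ (Fin n)) := closedBall 0 (2*r) with hA3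
  set A4 : Set (EuclideanSpace ℝ (Fin n)) := {η | 2*r ≤ ‖η‖ ∧ ‖η‖ < b} with hA4
  set A5 : Set (EuclideanSpace ℝ (Fin n)) := {η : EuclideanSpace ℝ (Fin n) | b ≤ ‖η‖} with hA5
  have hA5m : MeasurableSet A5 := measurable_norm measurableSet_Ici
  -- ball integral facts
  have hBall₂ := ball_rpow_eval (n := n) hn (s := κ₂-(n:ℝ)) (R := r/2)
      (by rw [show κ₂-(n:ℝ)+n = κ₂ by ring]; exact hκ₂) hr2
  have hBall₁ := ball_rpow_eval (n := n) hn (s := κ₁-(n:ℝ)) (R := r/2)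
      (by rw [show κ₁-(n:ℝ)+n = κ₁ by ring]; exact hκ₁) hr2
  have hShell := shell_rpow_eval (n := n) hn (a := 2*r) (b := b) (by linarith) hb2r
  -- integrability of the pieces
  have I1 : Integrable (A1.indicator g1) := by
    refine IntegrableOn.integrable_indicator ?_ measurableSet_ball
    exact (hBall₂.1.const_mul (M^2 * (r/2)^(κ₁-(n:ℝ))))
  have Iψ : Integrable ψ := by
    refine IntegrableOn.integrable_indicator ?_ measurableSet_ball
    exact (hBall₁.1.const_mul (M^2 * (r/2)^(κ₂-(n:ℝ))))
  have I2 : Integrable (fun η => ψ (lam - η)) := Iψ.comp_sub_left lam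
  have I3 : Integrable (A3.indicator (fun _ => g3)) := by
    refine IntegrableOn.integrable_indicator ?_ measurableSet_closedBall
    exact integrableOn_const measure_closedBall_lt_top.ne enorm_ne_top
  have I4 : Integrable (A4.indicator g4) := by
    refine IntegrableOn.integrable_indicator ?_ (shell_measurable _ _)
    exact (hShell.1.const_mul (M^2 * 2^((n:ℝ)-κ₁)))
  have I5 : Integrable (A5.indicator g5) := by
    refine IntegrableOn.integrable_indicator ?_ hA5m
    exact (hf₂i.const_mul (M * 2^((n:ℝ)-κ₁))).integrableOn
  -- a.e. pointwise bound
  have hae0 : ∀ᵐ η : EuclideanSpace ℝ (Fin n) ∂volume, η ≠ 0 := by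
    refine (ae_iff).2 ?_
    simpa using measure_singleton (0 : EuclideanSpace ℝ (Fin n))
  have haelam : ∀ᵐ η : EuclideanSpace ℝ (Fin n) ∂volume, η ≠ lam := by
    refine (ae_iff).2 ?_
    simpa using measure_singleton lam
  have key : (∫ η, f₁ (lam - η) * f₂ η) ≤
      ∫ η, (A1.indicator g1 η + ψ (lam - η) + A3.indicator (fun _ => g3) η
        + A4.indicator g4 η + A5.indicator g5 η) := by
    refine integral_mono_of_nonneg
      (Filter.Eventually.of_forall fun η => mul_nonneg (hf₁0 _) (hf₂0 _))
      ((((I1.add I2).add I3).add I4).add I5) ?_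
    filter_upwards [hae0, haelam] with η hη0 hηlam
    have hu : lam - η ≠ 0 := sub_ne_zero.2 (Ne.symm hηlam)
    have hη : 0 < ‖η‖ := norm_pos_iff.2 hη0
    have hun : 0 < ‖lam - η‖ := norm_pos_iff.2 hu
    have hf1b : f₁ (lam - η) ≤ M * ‖lam - η‖ ^ (κ₁-(n:ℝ)) := hb₁ _ hu
    have hf2b : f₂ η ≤ M * ‖η‖ ^ (κ₂-(n:ℝ)) := hb₂ _ hη0
    -- nonnegativity of each summand
    have hT1 : 0 ≤ A1.indicator g1 η := by
      refine Set.indicator_nonneg (fun x _ => ?_) η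
      have := Real.rpow_nonneg (norm_nonneg x) (κ₂-(n:ℝ))
      have := Real.rpow_nonneg hr2.le (κ₁-(n:ℝ))
      positivity
    have hT2 : 0 ≤ ψ (lam - η) := by
      refine Set.indicator_nonneg (fun x _ => ?_) _
      have := Real.rpow_nonneg (norm_nonneg x) (κ₁-(n:ℝ))
      have := Real.rpow_nonneg hr2.le (κ₂-(n:ℝ))
      positivity
    have hT3 : 0 ≤ A3.indicator (fun _ => g3) η := by
      refine Set.indicator_nonneg (fun x _ => ?_) η
      have := Real.rpow_nonneg hr2.le (κ₁-(n:ℝ))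
      have := Real.rpow_nonneg hr2.le (κ₂-(n:ℝ))
      positivity
    have hT4 : 0 ≤ A4.indicator g4 η := by
      refine Set.indicator_nonneg (fun x _ => ?_) η
      have := Real.rpow_nonneg (norm_nonneg x) (-(n:ℝ))
      have := Real.rpow_nonneg (by norm_num : (0:ℝ) ≤ 2) ((n:ℝ)-κ₁)
      positivity
    have hT5 : 0 ≤ A5.indicator g5 η := by
      refine Set.indicator_nonneg (fun x _ => ?_) η
      have := hf₂0 x
      have := Real.rpow_nonneg (by norm_num : (0:ℝ) ≤ 2) ((n:ℝ)-κ₁)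
      positivity
    by_cases h1 : η ∈ A1
    · -- small η
      have hηs : ‖η‖ < r/2 := by simpa [hA1, mem_ball_zero_iff] using h1
      have hfar : r/2 ≤ ‖lam - η‖ := by
        have := norm_sub_norm_le lam η
        linarith
      have hf1' : f₁ (lam - η) ≤ M * (r/2) ^ (κ₁-(n:ℝ)) :=
        hf1b.trans (mul_le_mul_of_nonneg_left
          (Real.rpow_le_rpow_of_nonpos hr2 hfar hκ₁n) hM0)
      have hprod : f₁ (lam - η) * f₂ η ≤ g1 η := by
        have := mul_le_mul hf1' hf2b (hf₂0 η)
          (by positivity)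
        calc f₁ (lam - η) * f₂ η ≤ (M * (r/2)^(κ₁-(n:ℝ))) * (M * ‖η‖^(κ₂-(n:ℝ))) := this
          _ = g1 η := by rw [hg1]; ring
      have : A1.indicator g1 η = g1 η := Set.indicator_of_mem h1 g1
      linarith
    · by_cases h2 : lam - η ∈ ball (0:EuclideanSpace ℝ (Fin n)) (r/2)
      · -- η near lam
        have hus : ‖lam - η‖ < r/2 := by simpa [mem_ball_zero_iff] using h2
        have hfar : r/2 ≤ ‖η‖ := by
          have h := norm_sub_norm_le lam (lam - η)
          simp only [sub_sub_cancel] at h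
          linarith
        have hf2' : f₂ η ≤ M * (r/2) ^ (κ₂-(n:ℝ)) :=
          hf2b.trans (mul_le_mul_of_nonneg_left
            (Real.rpow_le_rpow_of_nonpos hr2 hfar hκ₂n) hM0)
        have hprod : f₁ (lam - η) * f₂ η ≤ ψ (lam - η) := by
          have hψval : ψ (lam - η) = M^2 * (r/2)^(κ₂-(n:ℝ)) * ‖lam - η‖^(κ₁-(n:ℝ)) :=
            Set.indicator_of_mem h2 _
          have := mul_le_mul hf1b hf2' (hf₂0 η) (by positivity)
          calc f₁ (lam - η) * f₂ η
              ≤ (M * ‖lam - η‖^(κ₁-(n:ℝ))) * (M * (r/2)^(κ₂-(n:ℝ))) := this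
            _ = ψ (lam - η) := by rw [hψval]; ring
        linarith
      · have hηbig : r/2 ≤ ‖η‖ := by
          by_contra hcon
          exact h1 (by simpa [hA1, mem_ball_zero_iff] using lt_of_not_ge hcon)
        have hubig : r/2 ≤ ‖lam - η‖ := by
          by_contra hcon
          exact h2 (by simpa [mem_ball_zero_iff] using lt_of_not_ge hcon)
        by_cases h3 : ‖η‖ ≤ 2*r
        · -- middle region
          have hmem : η ∈ A3 := by simpa [hA3, mem_closedBall_zero_iff] using h3
          have hf1' : f₁ (lam - η) ≤ M * (r/2) ^ (κ₁-(n:ℝ)) :=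
            hf1b.trans (mul_le_mul_of_nonneg_left
              (Real.rpow_le_rpow_of_nonpos hr2 hubig hκ₁n) hM0)
          have hf2' : f₂ η ≤ M * (r/2) ^ (κ₂-(n:ℝ)) :=
            hf2b.trans (mul_le_mul_of_nonneg_left
              (Real.rpow_le_rpow_of_nonpos hr2 hηbig hκ₂n) hM0)
          have hprod : f₁ (lam - η) * f₂ η ≤ g3 := by
            have := mul_le_mul hf1' hf2' (hf₂0 η) (by positivity)
            calc f₁ (lam - η) * f₂ η
                ≤ (M * (r/2)^(κ₁-(n:ℝ))) * (M * (r/2)^(κ₂-(n:ℝ))) := this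
              _ = g3 := by rw [hg3]; ring
          have : A3.indicator (fun _ => g3) η = g3 := Set.indicator_of_mem hmem _
          linarith
        · -- outer region
          have h2r : 2*r < ‖η‖ := lt_of_not_ge h3
          have hhalf : ‖η‖/2 ≤ ‖lam - η‖ := by
            have h := norm_sub_norm_le η lam
            have hrev : ‖η - lam‖ = ‖lam - η‖ := norm_sub_rev _ _
            rw [hrev] at h
            have hrn : r = ‖lam‖ := hrdef
            linarith
          have hhalfpos : 0 < ‖η‖/2 := by linarith
          have hf1' : f₁ (lam - η) ≤ M * (‖η‖/2) ^ (κ₁-(n:ℝ)) :=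
            hf1b.trans (mul_le_mul_of_nonneg_left
              (Real.rpow_le_rpow_of_nonpos hhalfpos hhalf hκ₁n) hM0)
          have hpow : (‖η‖/2) ^ (κ₁-(n:ℝ)) = 2^((n:ℝ)-κ₁) * ‖η‖^(κ₁-(n:ℝ)) := by
            rw [Real.div_rpow (norm_nonneg _) (by norm_num : (0:ℝ) ≤ 2),
              div_eq_mul_inv, ← Real.rpow_neg (by norm_num : (0:ℝ) ≤ 2),
              show -(κ₁-(n:ℝ)) = (n:ℝ)-κ₁ by ring, mul_comm]
          by_cases h4 : ‖η‖ < b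
          · have hmem : η ∈ A4 := ⟨h2r.le, h4⟩
            have hprod : f₁ (lam - η) * f₂ η ≤ g4 η := by
              have := mul_le_mul hf1' hf2b (hf₂0 η) (by positivity)
              have hrpowadd : ‖η‖^(κ₁-(n:ℝ)) * ‖η‖^(κ₂-(n:ℝ)) = ‖η‖^(-(n:ℝ)) := by
                rw [← Real.rpow_add hη, show κ₁-(n:ℝ)+(κ₂-(n:ℝ)) = -(n:ℝ) by linarith]
              calc f₁ (lam - η) * f₂ η
                  ≤ (M * (‖η‖/2)^(κ₁-(n:ℝ))) * (M * ‖η‖^(κ₂-(n:ℝ))) := this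
                _ = M^2 * 2^((n:ℝ)-κ₁) * (‖η‖^(κ₁-(n:ℝ)) * ‖η‖^(κ₂-(n:ℝ))) := by
                    rw [hpow]; ring
                _ = g4 η := by rw [hrpowadd, hg4]
            have : A4.indicator g4 η = g4 η := Set.indicator_of_mem hmem g4
            linarith
          · have hmem : η ∈ A5 := le_of_not_gt h4
            have hη1 : 1 ≤ ‖η‖ := le_trans hb1 hmem
            have hbdd : (‖η‖/2) ^ (κ₁-(n:ℝ)) ≤ 2^((n:ℝ)-κ₁) := by
              have h12 : (1:ℝ)/2 ≤ ‖η‖/2 := by linarith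
              have := Real.rpow_le_rpow_of_nonpos (by norm_num : (0:ℝ) < 1/2) h12 hκ₁n
              calc (‖η‖/2) ^ (κ₁-(n:ℝ)) ≤ ((1:ℝ)/2) ^ (κ₁-(n:ℝ)) := this
                _ = 2^((n:ℝ)-κ₁) := by
                    rw [one_div, Real.inv_rpow (by norm_num : (0:ℝ) ≤ 2),
                      ← Real.rpow_neg (by norm_num : (0:ℝ) ≤ 2),
                      show -(κ₁-(n:ℝ)) = (n:ℝ)-κ₁ by ring]
            have hf1'' : f₁ (lam - η) ≤ M * 2^((n:ℝ)-κ₁) :=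
              hf1'.trans (mul_le_mul_of_nonneg_left hbdd hM0)
            have hprod : f₁ (lam - η) * f₂ η ≤ g5 η := by
              have := mul_le_mul_of_nonneg_right hf1'' (hf₂0 η)
              calc f₁ (lam - η) * f₂ η ≤ (M * 2^((n:ℝ)-κ₁)) * f₂ η := this
                _ = g5 η := by rw [hg5]
            have : A5.indicator g5 η = g5 η := Set.indicator_of_mem hmem g5
            linarith
  -- split the integral of the majorant
  have hsplit : ∫ η, (A1.indicator g1 η + ψ (lam - η) + A3.indicator (fun _ => g3) η
        + A4.indicator g4 η + A5.indicator g5 η)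
      = (∫ η, A1.indicator g1 η) + (∫ η, ψ (lam - η)) + (∫ η, A3.indicator (fun _ => g3) η)
        + (∫ η, A4.indicator g4 η) + (∫ η, A5.indicator g5 η) := by
    have J1 : Integrable (fun η => A1.indicator g1 η + ψ (lam - η)) := I1.add I2
    have J2 : Integrable (fun η => A1.indicator g1 η + ψ (lam - η)
        + A3.indicator (fun _ => g3) η) := J1.add I3
    have J3 : Integrable (fun η => A1.indicator g1 η + ψ (lam - η)
        + A3.indicator (fun _ => g3) η + A4.indicator g4 η) := J2.add I4
    rw [integral_add J3 I5, integral_add J2 I4, integral_add J1 I3, integral_add I1 I2]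
  have hcancel₂ : (r/2)^(κ₁-(n:ℝ)) * (r/2)^κ₂ = 1 := by
    rw [← Real.rpow_add hr2, show κ₁-(n:ℝ)+κ₂ = 0 by linarith, Real.rpow_zero]
  have hcancel₁ : (r/2)^(κ₂-(n:ℝ)) * (r/2)^κ₁ = 1 := by
    rw [← Real.rpow_add hr2, show κ₂-(n:ℝ)+κ₁ = 0 by linarith, Real.rpow_zero]
  have hB2 := hBall₂.2
  rw [show κ₂-(n:ℝ)+(n:ℝ) = κ₂ by ring] at hB2
  have hB1 := hBall₁.2
  rw [show κ₁-(n:ℝ)+(n:ℝ) = κ₁ by ring] at hB1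
  have E1 : (∫ η, A1.indicator g1 η) = M^2*cn/κ₂ := by
    rw [integral_indicator measurableSet_ball]
    simp only [hg1]
    rw [MeasureTheory.integral_const_mul, hB2]
    have : M^2 * (r/2)^(κ₁-(n:ℝ)) * (cn * ((r/2)^κ₂/κ₂))
        = (M^2*cn/κ₂) * ((r/2)^(κ₁-(n:ℝ)) * (r/2)^κ₂) := by ring
    rw [this, hcancel₂, mul_one]
  have E2 : (∫ η, ψ (lam - η)) = M^2*cn/κ₁ := by
    rw [integral_sub_left_eq_self ψ volume lam, hψ, integral_indicator measurableSet_ball,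
      MeasureTheory.integral_const_mul, hB1]
    have : M^2 * (r/2)^(κ₂-(n:ℝ)) * (cn * ((r/2)^κ₁/κ₁))
        = (M^2*cn/κ₁) * ((r/2)^(κ₂-(n:ℝ)) * (r/2)^κ₁) := by ring
    rw [this, hcancel₁, mul_one]
  have E3 : (∫ η, A3.indicator (fun _ => g3) η) = M^2*vB*(4:ℝ)^(n:ℝ) := by
    rw [integral_indicator measurableSet_closedBall, setIntegral_const, smul_eq_mul]
    have hvol : (volume (closedBall (0:EuclideanSpace ℝ (Fin n)) (2*r))).toReal
        = (2*r)^n * vB := by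
      rw [Measure.addHaar_closedBall volume 0 (by linarith : (0:ℝ) ≤ 2*r),
        finrank_euclideanSpace_fin, ENNReal.toReal_mul,
        ENNReal.toReal_ofReal (by positivity)]
    have hmid : (r/2)^(κ₁-(n:ℝ)) * (r/2)^(κ₂-(n:ℝ)) = (r/2)^(-(n:ℝ)) := by
      rw [← Real.rpow_add hr2, show κ₁-(n:ℝ)+(κ₂-(n:ℝ)) = -(n:ℝ) by linarith]
    have h4n : (2*r)^(n:ℕ) * (r/2)^(-(n:ℝ)) = (4:ℝ)^(n:ℝ) := by
      rw [← Real.rpow_natCast (2*r) n, Real.rpow_neg hr2.le, ← div_eq_mul_inv,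
        ← Real.div_rpow (by linarith : (0:ℝ) ≤ 2*r) hr2.le,
        show 2*r/(r/2) = 4 by rw [div_eq_iff (ne_of_gt hr2)]; ring]
    calc (volume (closedBall (0:EuclideanSpace ℝ (Fin n)) (2*r))).toReal * g3
        = ((2*r)^n * vB) * (M^2 * ((r/2)^(κ₁-(n:ℝ)) * (r/2)^(κ₂-(n:ℝ)))) := by
          rw [hvol, hg3]; ring
      _ = M^2*vB*((2*r)^(n:ℕ) * (r/2)^(-(n:ℝ))) := by rw [hmid]; ring
      _ = M^2*vB*(4:ℝ)^(n:ℝ) := by rw [h4n]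
  have E4 : (∫ η, A4.indicator g4 η) = M^2*2^((n:ℝ)-κ₁) * (cn * Real.log (b/(2*r))) := by
    rw [integral_indicator (shell_measurable _ _)]
    simp only [hg4]
    rw [MeasureTheory.integral_const_mul, hShell.2]
  have E5 : (∫ η, A5.indicator g5 η) ≤ M*2^((n:ℝ)-κ₁) * ∫ η, f₂ η := by
    rw [integral_indicator hA5m]
    have h2p : (0:ℝ) ≤ 2^((n:ℝ)-κ₁) := (Real.rpow_pos_of_pos (by norm_num) _).le
    have hnn : 0 ≤ᵐ[volume] (fun η => M * 2^((n:ℝ)-κ₁) * f₂ η) :=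
      Filter.Eventually.of_forall fun η =>
        mul_nonneg (mul_nonneg hM0 h2p) (hf₂0 η)
    have := setIntegral_le_integral (s := A5)
      (hf₂i.const_mul (M * 2^((n:ℝ)-κ₁))) hnn
    simpa [hg5, MeasureTheory.integral_const_mul, mul_assoc] using this
  -- logarithm comparison
  have hbpos : 0 < b := lt_of_lt_of_le one_pos hb1
  have hrinv : 0 < 1/r := by positivity
  have hlog : Real.log (b/(2*r)) ≤ Real.log (2 + 1/r) := by
    apply Real.log_le_log (div_pos hbpos (by linarith))
    rw [div_le_iff₀ (by linarith : (0:ℝ) < 2*r)]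
    have hexp : (2+1/r)*(2*r) = 4*r + 2 := by field_simp; ring
    rw [hexp]
    have hble : b ≤ 2*r + 1 := max_le (by linarith) (by linarith)
    linarith
  have hlog2pos : (0:ℝ) < Real.log 2 := Real.log_pos (by norm_num)
  have hL2 : Real.log 2 ≤ Real.log (2 + 1/r) :=
    Real.log_le_log (by norm_num) (by linarith)
  have hLpos : 0 < Real.log (2 + 1/r) := lt_of_lt_of_le hlog2pos hL2
  have hE4b : M^2*2^((n:ℝ)-κ₁) * (cn * Real.log (b/(2*r))) ≤ C₄ * Real.log (2 + 1/r) := by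
    have h1 : M^2*2^((n:ℝ)-κ₁) * (cn * Real.log (b/(2*r))) = C₄ * Real.log (b/(2*r)) := by
      rw [hC₄]; ring
    rw [h1]
    exact mul_le_mul_of_nonneg_left hlog hC₄0
  have htot : (∫ η, f₁ (lam - η) * f₂ η) ≤ C₀ + C₄ * Real.log (2 + 1/r) := by
    rw [hsplit, E1, E2, E3, E4] at key
    rw [hC₀]
    linarith
  have hfin : C₀ + C₄ * Real.log (2 + 1/r) ≤ (C₀ / Real.log 2 + C₄) * Real.log (2 + 1/r) := by
    have h1 : C₀ = (C₀/Real.log 2) * Real.log 2 := (div_mul_cancel₀ C₀ hlog2pos.ne').symm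
    have h2 : (C₀/Real.log 2) * Real.log 2 ≤ (C₀/Real.log 2) * Real.log (2 + 1/r) :=
      mul_le_mul_of_nonneg_left hL2 (div_nonneg hC₀0 hlog2pos.le)
    have h3 : C₀ ≤ (C₀/Real.log 2) * Real.log (2 + 1/r) := h1.trans_le h2
    calc C₀ + C₄ * Real.log (2 + 1/r)
        ≤ (C₀/Real.log 2) * Real.log (2 + 1/r) + C₄ * Real.log (2 + 1/r) :=
          add_le_add h3 le_rfl
      _ = (C₀ / Real.log 2 + C₄) * Real.log (2 + 1/r) := by ring
  linarith
end
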